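/- Let k ≥ 3 and let f : (0,1)^k → ℝⁿ be a real analytic immersion whose image M is not contained in any rational affine hyperplane of ℝⁿ. Then there exists α ∈ (0,1) such that the image of f_α : (0,1)^{k-1} → ℝⁿ, f_α(x₁,…,x_{k-1}) = f(x₁,…,x_{k-1},α), is not contained in any rational affine hyperplane. -/

import Mathlib

/-- A rational affine hyperplane in `ℝⁿ`. -/
def IsRatAffineHyperplane (n : ℕ) (A : Set (Fin n → ℝ)) : Prop :=
  ∃ m : Fin n → ℤ, m ≠ 0 ∧ ∃ m₀ : ℤ, A = {ξ | ∑ i, (m i : ℝ) * ξ i = (m₀ : ℝ)}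

/-- Lemma 3.5: if the image of a real analytic immersion `f : (0,1)^k → ℝⁿ` (with
`k = k'+1 ≥ 3`) is not contained in any rational affine hyperplane, then there is
`α ∈ (0,1)` such that the image of the slice `f_α` is not contained in any rational
affine hyperplane. -/
theorem slice_not_in_rational_hyperplane (k n : ℕ) (hk : 2 ≤ k)
    (f : (Fin (k + 1) → ℝ) → (Fin n → ℝ))
    (hana : AnalyticOnNhd ℝ f {x : Fin (k + 1) → ℝ | ∀ i, x i ∈ Set.Ioo (0 : ℝ) 1})
    (hinj : Set.InjOn f {x : Fin (k + 1) → ℝ | ∀ i, x i ∈ Set.Ioo (0 : ℝ) 1})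
    (himm : ∀ x ∈ {x : Fin (k + 1) → ℝ | ∀ i, x i ∈ Set.Ioo (0 : ℝ) 1},
      Function.Injective (fderiv ℝ f x))
    (hnot : ∀ A : Set (Fin n → ℝ), IsRatAffineHyperplane n A →
      ¬ f '' {x : Fin (k + 1) → ℝ | ∀ i, x i ∈ Set.Ioo (0 : ℝ) 1} ⊆ A) :
    ∃ α ∈ Set.Ioo (0 : ℝ) 1, ∀ A : Set (Fin n → ℝ), IsRatAffineHyperplane n A →
      ¬ (fun x : Fin k → ℝ => f (Fin.snoc x α)) ''
          {x : Fin k → ℝ | ∀ i, x i ∈ Set.Ioo (0 : ℝ) 1} ⊆ A := by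
  by_contra hcon
  push_neg at hcon
  set U : Set (Fin (k + 1) → ℝ) := {x | ∀ i, x i ∈ Set.Ioo (0 : ℝ) 1} with hUdef
  set C : Set (Fin k → ℝ) := {x | ∀ i, x i ∈ Set.Ioo (0 : ℝ) 1} with hCdef
  haveI : LocallyCompactSpace (Set.Ioo (0 : ℝ) 1) :=
    (isOpen_Ioo : IsOpen (Set.Ioo (0 : ℝ) 1)).locallyCompactSpace
  haveI : Nonempty (Set.Ioo (0 : ℝ) 1) := ⟨⟨1/2, by norm_num⟩⟩
  -- countable index of rational hyperplanes
  let ι := { m : Fin n → ℤ // m ≠ 0 } × ℤ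
  let S : ι → Set (Set.Ioo (0 : ℝ) 1) := fun q =>
    {α | ∀ y ∈ C, ∑ i, (q.1.1 i : ℝ) * f (Fin.snoc y (α : ℝ)) i = (q.2 : ℝ)}
  -- continuity of the slice evaluation in α
  have hcont : ∀ y ∈ C, Continuous fun α : Set.Ioo (0 : ℝ) 1 => f (Fin.snoc y (α : ℝ)) := by
    intro y hy
    have hsnoc : Continuous fun a : ℝ => (Fin.snoc y a : Fin (k + 1) → ℝ) := by
      refine continuous_pi fun i => ?_
      refine Fin.lastCases ?_ (fun j => ?_) i
      · simp only [Fin.snoc_last]; exact continuous_id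
      · simp only [Fin.snoc_castSucc]; exact continuous_const
    have hmaps : ∀ α : Set.Ioo (0 : ℝ) 1, (Fin.snoc y (α : ℝ) : Fin (k + 1) → ℝ) ∈ U := by
      intro α
      intro i
      refine Fin.lastCases ?_ (fun j => ?_) i
      · simpa only [Fin.snoc_last] using α.2
      · simpa only [Fin.snoc_castSucc] using hy j
    exact hana.continuousOn.comp_continuous
      (hsnoc.comp continuous_subtype_val) hmaps
  -- the sets S q are closed
  have hSc : ∀ q, IsClosed (S q) := by
    intro q
    have : S q = ⋂ y ∈ C,
        {α : Set.Ioo (0 : ℝ) 1 | ∑ i, (q.1.1 i : ℝ) * f (Fin.snoc y (α : ℝ)) i = (q.2 : ℝ)} := by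
      ext α; simp [S]
    rw [this]
    refine isClosed_biInter fun y hy => isClosed_eq ?_ continuous_const
    exact continuous_finset_sum _ fun i _ =>
      continuous_const.mul ((continuous_apply i).comp (hcont y hy))
  -- the sets S q cover (0,1)
  have hcover : ⋃ q, S q = Set.univ := by
    ext α
    simp only [Set.mem_iUnion, Set.mem_univ, iff_true]
    obtain ⟨A, ⟨m, hm, m₀, rfl⟩, hsub⟩ := hcon (α : ℝ) α.2
    exact ⟨⟨⟨m, hm⟩, m₀⟩, fun y hy => hsub ⟨y, hy, rfl⟩⟩
  -- Baire category
  obtain ⟨q, α₀, hα₀⟩ := nonempty_interior_of_iUnion_of_closed hSc hcover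
  have hW : IsOpen (Subtype.val '' interior (S q)) :=
    (isOpen_Ioo : IsOpen (Set.Ioo (0 : ℝ) 1)).isOpenMap_subtype_val _ isOpen_interior
  obtain ⟨a, b, hab, hIoo⟩ :=
    mem_nhds_iff_exists_Ioo_subset.1 (hW.mem_nhds ⟨α₀, hα₀, rfl⟩)
  set m : Fin n → ℤ := q.1.1
  set m₀ : ℤ := q.2
  set g : (Fin (k + 1) → ℝ) → ℝ := fun x => (∑ i, (m i : ℝ) * f x i) - (m₀ : ℝ) with hgdef
  -- g is analytic on U
  have hfi : ∀ i, AnalyticOnNhd ℝ (fun x => f x i) U := fun i x hx =>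
    ((ContinuousLinearMap.proj i : (Fin n → ℝ) →L[ℝ] ℝ).analyticAt _).comp (hana x hx)
  have hg : AnalyticOnNhd ℝ g U := by
    refine AnalyticOnNhd.sub ?_ analyticOnNhd_const
    exact Finset.analyticOnNhd_fun_sum _ fun i _ => analyticOnNhd_const.mul (hfi i)
  -- U is open and preconnected
  have hUpi : U = Set.pi Set.univ (fun _ : Fin (k + 1) => Set.Ioo (0 : ℝ) 1) := by
    ext x; simp [Set.mem_pi, hUdef]
  have hUconn : IsPreconnected U := by
    rw [hUpi]
    exact (convex_pi fun i _ => convex_Ioo (0 : ℝ) 1).isPreconnected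
  -- the open box V on which g vanishes
  set P : Fin (k + 1) → Set ℝ := Fin.snoc (fun _ : Fin k => Set.Ioo (0 : ℝ) 1) (Set.Ioo a b)
    with hPdef
  have hPo : IsOpen (Set.univ.pi P) := by
    refine isOpen_set_pi Set.finite_univ fun i _ => ?_
    refine Fin.lastCases ?_ (fun j => ?_) i
    · simp only [hPdef, Fin.snoc_last]; exact isOpen_Ioo
    · simp only [hPdef, Fin.snoc_castSucc]; exact isOpen_Ioo
  set z₀ : Fin (k + 1) → ℝ := Fin.snoc (fun _ : Fin k => (1/2 : ℝ)) (α₀ : ℝ) with hz₀def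
  have hz₀P : z₀ ∈ Set.univ.pi P := by
    intro i _
    refine Fin.lastCases ?_ (fun j => ?_) i
    · simp only [hz₀def, hPdef, Fin.snoc_last]; exact hab
    · simp only [hz₀def, hPdef, Fin.snoc_castSucc]; norm_num
  have hz₀U : z₀ ∈ U := by
    intro i
    refine Fin.lastCases ?_ (fun j => ?_) i
    · simpa only [hz₀def, Fin.snoc_last] using α₀.2
    · simp only [hz₀def, Fin.snoc_castSucc]; norm_num
  have hgzero : ∀ x ∈ Set.univ.pi P, g x = 0 := by
    intro x hx
    have ht : x (Fin.last k) ∈ Set.Ioo a b := by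
      have := hx (Fin.last k) (Set.mem_univ _)
      simpa only [hPdef, Fin.snoc_last] using this
    obtain ⟨β, hβ, hβval⟩ := hIoo ht
    have hβS : β ∈ S q := interior_subset hβ
    have hy : Fin.init x ∈ C := by
      intro j
      have := hx (Fin.castSucc j) (Set.mem_univ _)
      simpa only [hPdef, Fin.snoc_castSucc, Fin.init] using this
    have := hβS (Fin.init x) hy
    rw [hβval, Fin.snoc_init_self] at this
    simp only [hgdef]; exact sub_eq_zero.mpr this
  have hev : g =ᶠ[nhds z₀] 0 :=
    Filter.eventuallyEq_of_mem (hPo.mem_nhds hz₀P) hgzero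
  have hEq : Set.EqOn g 0 U :=
    hg.eqOn_zero_of_preconnected_of_eventuallyEq_zero hUconn hz₀U hev
  -- contradiction with hnot
  refine hnot {ξ | ∑ i, (m i : ℝ) * ξ i = (m₀ : ℝ)} ⟨m, q.1.2, m₀, rfl⟩ ?_
  rintro _ ⟨x, hx, rfl⟩
  have := hEq hx
  simpa only [hgdef, Pi.zero_apply, sub_eq_zero, Set.mem_setOf_eq] using this
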